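/- Let i ∈ {1,…,N} and assume n_i > 0, O_i ≠ 0, D_i = O_i + w_i ≠ 0, and ⟨V⟩_α ≠ 0. Then the vector ζ_i = φ(D_i) − (⟨V⟩_α + w_i/n_i − (⟨w_i, ⟨V⟩_α⟩/(n_i ‖⟨V⟩_α‖²))·⟨V⟩_α) satisfies ‖ζ_i‖ ≤ 2 π̃_α ρ_i + 2 ρ_i² + π̃_i (1 + 4ρ_i) + (1 + 2ρ_i) √(Q_{i,n_iα}). -/

import Mathlib

open Finset
open scoped BigOperators RealInnerProductSpace

/-- Normalization operator `φ(x) = x / ‖x‖` on `ℝ³`. -/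
noncomputable def phi (x : EuclideanSpace ℝ (Fin 3)) : EuclideanSpace ℝ (Fin 3) := ‖x‖⁻¹ • x


lemma phi_smul (c : ℝ) (hc : 0 < c) (x : EuclideanSpace ℝ (Fin 3)) (hx : x ≠ 0) :
    phi (c • x) = phi x := by
  have hx' : ‖x‖ ≠ 0 := norm_ne_zero_iff.2 hx
  unfold phi
  rw [norm_smul, smul_smul, Real.norm_eq_abs, abs_of_pos hc]
  congr 1
  field_simp

lemma phi_norm (x : EuclideanSpace ℝ (Fin 3)) (hx : x ≠ 0) : ‖phi x‖ = 1 := by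
  have hx' : ‖x‖ ≠ 0 := norm_ne_zero_iff.2 hx
  unfold phi
  rw [norm_smul, Real.norm_eq_abs, abs_of_pos (by positivity : (0:ℝ) < ‖x‖⁻¹)]
  field_simp

lemma proj_diff (w a b : EuclideanSpace ℝ (Fin 3)) (ha : ‖a‖ = 1) (hb : ‖b‖ = 1) :
    ‖⟪w,a⟫ • a - ⟪w,b⟫ • b‖ ≤ 2 * ‖w‖ * ‖a - b‖ := by
  have hid : ⟪w,a⟫ • a - ⟪w,b⟫ • b = ⟪w,a-b⟫ • a + ⟪w,b⟫ • (a - b) := by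
    rw [inner_sub_right, sub_smul, smul_sub]; abel
  rw [hid]
  refine (norm_add_le _ _).trans ?_
  rw [norm_smul, norm_smul, ha, Real.norm_eq_abs, Real.norm_eq_abs]
  have h1 : |⟪w,a-b⟫| ≤ ‖w‖ * ‖a-b‖ := abs_real_inner_le_norm w (a-b)
  have h2 : |⟪w,b⟫| ≤ ‖w‖ := by simpa [hb] using abs_real_inner_le_norm w b
  have h3 : 0 ≤ ‖a - b‖ := norm_nonneg _
  nlinarith

lemma key_poly (s r : ℝ) (hr1 : r ≤ 1) (h1 : 1-r ≤ s) (h2 : s ≤ 1+r) :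
    4*s*(1-s)^2 + s*(s^2-1-r^2)^2 + 2*(s^2-1-r^2)*(s^2+1-r^2)*(1-s) ≤ 16*s*r^4 := by
  have hp : 0 ≤ s-1+r := by linarith
  have hq : 0 ≤ 1+r-s := by linarith
  have hc : 0 ≤ 2-2*r := by linarith
  nlinarith [mul_nonneg (pow_nonneg hq 4) hc,
    mul_nonneg (mul_nonneg hp (pow_nonneg hq 3)) hc,
    mul_nonneg (mul_nonneg (pow_nonneg hp 2) (pow_nonneg hq 2)) hc,
    mul_nonneg hp (pow_nonneg hq 3),
    mul_nonneg (pow_nonneg hp 2) (pow_nonneg hq 2),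
    mul_nonneg (pow_nonneg hp 3) hq,
    pow_nonneg hp 4,
    mul_nonneg (pow_nonneg hp 3) (pow_nonneg hq 2),
    mul_nonneg (pow_nonneg hp 4) hq,
    pow_nonneg hp 5]

lemma key_unit (e w : EuclideanSpace ℝ (Fin 3)) (he : ‖e‖ = 1) (hd : e + w ≠ 0) :
    ‖phi (e + w) - e - w + ⟪w, e⟫ • e‖ ≤ 2 * ‖w‖ ^ 2 := by
  set s := ‖e + w‖ with hs_def
  set r := ‖w‖ with hr_def
  set a := ⟪w, e⟫ with ha_def
  have hs : 0 < s := norm_pos_iff.2 hd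
  have hr : 0 ≤ r := norm_nonneg _
  have haa : |a| ≤ r := by simpa [he] using abs_real_inner_le_norm w e
  have hs2 : s ^ 2 = 1 + 2 * a + r ^ 2 := by
    rw [hs_def, norm_add_sq_real, he, real_inner_comm]; ring
  have hsle : s ≤ 1 + r := by simpa [he] using norm_add_le e w
  have hsge : 1 - r ≤ s := by
    have h := norm_sub_norm_le e (-w)
    simp only [sub_neg_eq_add, norm_neg, he] at h
    linarith
  have hinv : (s⁻¹ - 1) * s = 1 - s := by field_simp
  have hEe : phi (e + w) - e - w + a • e = (s⁻¹ - 1) • (e + w) + a • e := by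
    unfold phi
    rw [sub_smul, one_smul]
    abel
  rw [hEe]
  rcases le_or_gt 1 r with hr1 | hr1
  · -- crude case
    refine (norm_add_le _ _).trans ?_
    rw [norm_smul, norm_smul, he, Real.norm_eq_abs, Real.norm_eq_abs, mul_one, ← hs_def]
    have h1 : |s⁻¹ - 1| * s = |1 - s| := by
      calc |s⁻¹ - 1| * s = |(s⁻¹ - 1) * s| := by rw [abs_mul, abs_of_pos hs]
        _ = |1 - s| := by rw [hinv]
    rw [h1]
    rcases le_or_gt s 1 with hcase | hcase
    · rw [abs_of_nonneg (by linarith)]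
      nlinarith
    · rw [abs_of_nonpos (by linarith)]
      nlinarith
  · -- sharp case
    have hu : ⟪e + w, e⟫ = 1 + a := by
      rw [inner_add_left, real_inner_self_eq_norm_sq, he, ← ha_def]; ring
    have hnorm : ‖(s⁻¹ - 1) • (e + w) + a • e‖ ^ 2
        = (1 - s) ^ 2 + 2 * ((s⁻¹ - 1) * a * (1 + a)) + a ^ 2 := by
      calc ‖(s⁻¹ - 1) • (e + w) + a • e‖ ^ 2
          = ‖(s⁻¹ - 1) • (e + w)‖ ^ 2 + 2 * ⟪(s⁻¹ - 1) • (e + w), a • e⟫ + ‖a • e‖ ^ 2 :=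
            norm_add_sq_real _ _
        _ = (|s⁻¹ - 1| * s) ^ 2 + 2 * ((s⁻¹ - 1) * (a * (1 + a))) + (|a| * 1) ^ 2 := by
            rw [norm_smul, norm_smul, real_inner_smul_left, real_inner_smul_right, hu, he,
              ← hs_def, Real.norm_eq_abs, Real.norm_eq_abs]
        _ = ((s⁻¹ - 1) * s) ^ 2 + 2 * ((s⁻¹ - 1) * a * (1 + a)) + a ^ 2 := by
            rw [mul_pow, mul_pow, sq_abs, sq_abs]; ring
        _ = (1 - s) ^ 2 + 2 * ((s⁻¹ - 1) * a * (1 + a)) + a ^ 2 := by rw [hinv]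
    have hpoly := key_poly s r hr1.le hsge hsle
    have hA : s ^ 2 - 1 - r ^ 2 = 2 * a := by linarith
    have hB : s ^ 2 + 1 - r ^ 2 = 2 + 2 * a := by linarith
    rw [hA, hB] at hpoly
    have hX2 : s * ((s⁻¹ - 1) * a * (1 + a)) = (1 - s) * a * (1 + a) := by
      field_simp
    have hXle : (1 - s) ^ 2 + 2 * ((s⁻¹ - 1) * a * (1 + a)) + a ^ 2 ≤ 4 * r ^ 4 := by
      rw [← mul_le_mul_iff_of_pos_left hs]
      nlinarith [hpoly, hX2]
    have key : ‖(s⁻¹ - 1) • (e + w) + a • e‖ ^ 2 ≤ (2 * r ^ 2) ^ 2 := by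
      rw [hnorm]; nlinarith [hXle]
    exact (pow_le_pow_iff_left₀ (norm_nonneg _) (by positivity) two_ne_zero).mp key

lemma key_scaled (O w : EuclideanSpace ℝ (Fin 3)) (hO : O ≠ 0) (hD : O + w ≠ 0) :
    ‖phi (O + w) - phi O - ‖O‖⁻¹ • (w - ⟪w, phi O⟫ • phi O)‖ ≤ 2 * ‖w‖ ^ 2 / ‖O‖ ^ 2 := by
  have hm : 0 < ‖O‖ := norm_pos_iff.2 hO
  have hm' : ‖O‖ ≠ 0 := hm.ne'
  set e := phi O with he_def
  have he : ‖e‖ = 1 := phi_norm O hO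
  set w' := ‖O‖⁻¹ • w with hw'_def
  have hew : e + w' = ‖O‖⁻¹ • (O + w) := by
    rw [he_def, hw'_def]; unfold phi; rw [smul_add]
  have hd' : e + w' ≠ 0 := by
    rw [hew]
    exact smul_ne_zero (inv_ne_zero hm') hD
  have hphi : phi (e + w') = phi (O + w) := by
    rw [hew, phi_smul _ (by positivity) _ hD]
  have hkey := key_unit e w' he hd'
  rw [hphi] at hkey
  have hexpr : phi (O + w) - e - w' + ⟪w', e⟫ • e
      = phi (O + w) - e - ‖O‖⁻¹ • (w - ⟪w, e⟫ • e) := by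
    rw [hw'_def, real_inner_smul_left, smul_sub, ← smul_assoc]
    simp [smul_smul]
    abel
  rw [hexpr] at hkey
  have hnw : 2 * ‖w'‖ ^ 2 = 2 * ‖w‖ ^ 2 / ‖O‖ ^ 2 := by
    rw [hw'_def, norm_smul, Real.norm_eq_abs, abs_of_pos (by positivity : (0:ℝ) < ‖O‖⁻¹)]
    field_simp
  rw [hnw] at hkey
  calc ‖phi (O + w) - phi O - ‖O‖⁻¹ • (w - ⟪w, phi O⟫ • phi O)‖
      = ‖phi (O + w) - e - ‖O‖⁻¹ • (w - ⟪w, e⟫ • e)‖ := by rw [he_def]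
    _ ≤ 2 * ‖w‖ ^ 2 / ‖O‖ ^ 2 := hkey

lemma sum_angle_bound (N : ℕ) (V : Fin N → EuclideanSpace ℝ (Fin 3)) (hV : ∀ j, ‖V j‖ = 1)
    (c : Fin N → ℝ) (hc : ∑ j, c j = 0) :
    ‖∑ j, c j • V j‖ ^ 2 ≤
      ∑ j, ∑ j', |c j| * |c j'| * InnerProductGeometry.angle (V j) (V j') ^ 2 / 2 := by
  have h1 : ‖∑ j, c j • V j‖ ^ 2 = ∑ j, ∑ j', c j * c j' * ⟪V j, V j'⟫ := by
    rw [← real_inner_self_eq_norm_sq, sum_inner]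
    refine Finset.sum_congr rfl fun j _ => ?_
    rw [real_inner_smul_left, inner_sum, Finset.mul_sum]
    refine Finset.sum_congr rfl fun j' _ => ?_
    rw [real_inner_smul_right]
    ring
  have h2 : ∑ j, ∑ j', c j * c j' = 0 := by
    rw [← Finset.sum_mul_sum, hc, zero_mul]
  calc ‖∑ j, c j • V j‖ ^ 2
      = ∑ j, ∑ j', (c j * c j' * (⟪V j, V j'⟫ - 1)) + ∑ j, ∑ j', c j * c j' := by
        rw [h1, ← Finset.sum_add_distrib]
        refine Finset.sum_congr rfl fun j _ => ?_
        rw [← Finset.sum_add_distrib]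
        refine Finset.sum_congr rfl fun j' _ => ?_
        ring
    _ = ∑ j, ∑ j', (c j * c j' * (⟪V j, V j'⟫ - 1)) := by rw [h2, add_zero]
    _ ≤ ∑ j, ∑ j', |c j| * |c j'| * InnerProductGeometry.angle (V j) (V j') ^ 2 / 2 := by
        refine Finset.sum_le_sum fun j _ => Finset.sum_le_sum fun j' _ => ?_
        set t := ⟪V j, V j'⟫ with ht_def
        set θ := InnerProductGeometry.angle (V j) (V j') with hθ_def
        have hcos : Real.cos θ = t := by
          rw [hθ_def, InnerProductGeometry.cos_angle, hV j, hV j', ht_def]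
          simp
        have ht1 : t ≤ 1 := by
          have := real_inner_le_norm (V j) (V j')
          rwa [hV j, hV j', one_mul] at this
        have ht2 : 1 - t ≤ θ ^ 2 / 2 := by
          have := Real.one_sub_sq_div_two_le_cos (x := θ)
          rw [hcos] at this
          linarith
        calc c j * c j' * (t - 1) ≤ |c j * c j' * (t - 1)| := le_abs_self _
          _ = |c j| * |c j'| * (1 - t) := by
              rw [abs_mul, abs_mul, abs_of_nonpos (by linarith : t - 1 ≤ 0)]
              ring
          _ ≤ |c j| * |c j'| * (θ ^ 2 / 2) := by
              have : (0:ℝ) ≤ |c j| * |c j'| := by positivity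
              nlinarith
          _ = |c j| * |c j'| * θ ^ 2 / 2 := by ring


set_option maxHeartbeats 1000000 in
/-- Proposition A.3: individual-level error bound for the reduced-order model. -/
theorem zeta_norm_le
    (N : ℕ) (hN : 0 < N)
    (V : Fin N → EuclideanSpace ℝ (Fin 3)) (hV : ∀ i, ‖V i‖ = 1)
    (ω : Fin N → Fin N → ℝ) (hω : ∀ i j, ω i j = 0 ∨ ω i j = 1)
    (α : Fin N → ℝ) (hα : ∀ i, 0 ≤ α i) (hαsum : ∑ i, α i = 1)
    (w : Fin N → EuclideanSpace ℝ (Fin 3))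
    (n : Fin N → ℝ) (hn : ∀ i, n i = ∑ j, ω i j)
    (O : Fin N → EuclideanSpace ℝ (Fin 3)) (hO : ∀ i, O i = ∑ j, ω i j • V j)
    (D : Fin N → EuclideanSpace ℝ (Fin 3)) (hD : ∀ i, D i = O i + w i)
    (Vα : EuclideanSpace ℝ (Fin 3)) (hVα : Vα = ∑ i, α i • V i)
    (Q : Fin N → ℝ)
    (hQ : ∀ i, Q i = (1 / n i ^ 2) *
      ∑ j, ∑ j', |ω i j - n i * α j| * |ω i j' - n i * α j'| *
        InnerProductGeometry.angle (V j) (V j') ^ 2 / 2)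
    (i : Fin N) (hn0 : 0 < n i) (hO0 : O i ≠ 0) (hD0 : D i ≠ 0) (hVα0 : Vα ≠ 0) :
    ‖phi (D i) - (Vα + (n i)⁻¹ • w i - (⟪w i, Vα⟫ / (n i * ‖Vα‖ ^ 2)) • Vα)‖ ≤
      2 * (1 - ‖Vα‖) * (‖w i‖ / ‖O i‖)
      + 2 * (‖w i‖ / ‖O i‖) ^ 2
      + (1 - ‖O i‖ / n i) * (1 + 4 * (‖w i‖ / ‖O i‖))
      + (1 + 2 * (‖w i‖ / ‖O i‖)) * Real.sqrt (Q i) := by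
  have hm : 0 < ‖O i‖ := norm_pos_iff.2 hO0
  have hm' : ‖O i‖ ≠ 0 := hm.ne'
  have hν' : n i ≠ 0 := hn0.ne'
  have hVαn : 0 < ‖Vα‖ := norm_pos_iff.2 hVα0
  have hVαn' : ‖Vα‖ ≠ 0 := hVαn.ne'
  have hωnn : ∀ k j, 0 ≤ ω k j := by
    intro k j; rcases hω k j with h | h <;> rw [h] <;> norm_num
  -- ‖O i‖ ≤ n i
  have hOn : ‖O i‖ ≤ n i := by
    rw [hO i, hn i]
    refine (norm_sum_le _ _).trans (le_of_eq ?_)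
    refine Finset.sum_congr rfl fun j _ => ?_
    rw [norm_smul, hV j, mul_one, Real.norm_eq_abs, abs_of_nonneg (hωnn i j)]
  -- ‖Vα‖ ≤ 1
  have hVα1 : ‖Vα‖ ≤ 1 := by
    rw [hVα, ← hαsum]
    refine (norm_sum_le _ _).trans (le_of_eq ?_)
    refine Finset.sum_congr rfl fun j _ => ?_
    rw [norm_smul, hV j, mul_one, Real.norm_eq_abs, abs_of_nonneg (hα j)]
  -- Q bound
  have hQnn : 0 ≤ Q i := by
    rw [hQ i]
    have h1 : (0:ℝ) ≤ ∑ j, ∑ j', |ω i j - n i * α j| * |ω i j' - n i * α j'| *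
        InnerProductGeometry.angle (V j) (V j') ^ 2 / 2 := by
      refine Finset.sum_nonneg fun j _ => Finset.sum_nonneg fun j' _ => ?_
      positivity
    positivity
  have hq : 0 ≤ Real.sqrt (Q i) := Real.sqrt_nonneg _
  have hQO : ‖(n i)⁻¹ • O i - Vα‖ ≤ Real.sqrt (Q i) := by
    set c : Fin N → ℝ := fun j => ω i j - n i * α j with hc_def
    have hc0 : ∑ j, c j = 0 := by
      simp only [hc_def, Finset.sum_sub_distrib, ← Finset.mul_sum, hαsum, mul_one, ← hn i,
        sub_self]
    have hvec : (n i)⁻¹ • O i - Vα = (n i)⁻¹ • ∑ j, c j • V j := by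
      have h1 : ∑ j, c j • V j = O i - n i • Vα := by
        rw [hO i, hVα, Finset.smul_sum, ← Finset.sum_sub_distrib]
        refine Finset.sum_congr rfl fun j _ => ?_
        rw [hc_def, sub_smul, smul_smul]
      rw [h1, smul_sub, smul_smul, inv_mul_cancel₀ hν', one_smul]
    have hb := sum_angle_bound N V hV c hc0
    have hsq : ‖(n i)⁻¹ • O i - Vα‖ ^ 2 ≤ Q i := by
      rw [hvec, norm_smul, Real.norm_eq_abs, abs_of_pos (by positivity : (0:ℝ) < (n i)⁻¹),
        mul_pow, hQ i]
      calc (n i)⁻¹ ^ 2 * ‖∑ j, c j • V j‖ ^ 2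
          ≤ (n i)⁻¹ ^ 2 * ∑ j, ∑ j', |c j| * |c j'| *
              InnerProductGeometry.angle (V j) (V j') ^ 2 / 2 := by
            have : (0:ℝ) ≤ (n i)⁻¹ ^ 2 := by positivity
            exact mul_le_mul_of_nonneg_left hb this
        _ = 1 / n i ^ 2 * ∑ j, ∑ j', |ω i j - n i * α j| * |ω i j' - n i * α j'| *
              InnerProductGeometry.angle (V j) (V j') ^ 2 / 2 := by
            rw [one_div, ← inv_pow]
    exact (Real.le_sqrt (norm_nonneg _) hQnn).mpr hsq
  -- unit vectors
  set Ohat := phi (O i) with hOhat_def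
  have hOhatm : Ohat = ‖O i‖⁻¹ • O i := rfl
  have hOhat1 : ‖Ohat‖ = 1 := phi_norm (O i) hO0
  set Vhat := ‖Vα‖⁻¹ • Vα with hVhat_def
  have hVhat1 : ‖Vhat‖ = 1 := by
    rw [hVhat_def, norm_smul, Real.norm_eq_abs, abs_of_pos (by positivity : (0:ℝ) < ‖Vα‖⁻¹)]
    field_simp
  -- distances
  have dOhat : ‖Ohat - (n i)⁻¹ • O i‖ = 1 - ‖O i‖ / n i := by
    rw [hOhatm, ← sub_smul, norm_smul, Real.norm_eq_abs]
    rw [abs_of_nonneg (by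
      have : (n i)⁻¹ ≤ ‖O i‖⁻¹ := inv_anti₀ hm hOn
      linarith)]
    field_simp
  have dVhat : ‖Vhat - Vα‖ = 1 - ‖Vα‖ := by
    have h1 : Vhat - Vα = (‖Vα‖⁻¹ - 1) • Vα := by
      rw [hVhat_def, sub_smul, one_smul]
    have h2 : (1:ℝ) ≤ ‖Vα‖⁻¹ := by
      nlinarith [mul_inv_cancel₀ hVαn', inv_pos.2 hVαn]
    rw [h1, norm_smul, Real.norm_eq_abs, abs_of_nonneg (by linarith)]
    field_simp
  have dVO : ‖Vhat - Ohat‖ ≤ (1 - ‖Vα‖) + Real.sqrt (Q i) + (1 - ‖O i‖ / n i) := by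
    have h0 : Vhat - Ohat = (Vhat - Vα) + ((Vα - (n i)⁻¹ • O i) + ((n i)⁻¹ • O i - Ohat)) := by
      abel
    rw [h0]
    refine (norm_add_le _ _).trans ?_
    have h1 := norm_add_le (Vα - (n i)⁻¹ • O i) ((n i)⁻¹ • O i - Ohat)
    have h2 : ‖Vα - (n i)⁻¹ • O i‖ ≤ Real.sqrt (Q i) := by
      rw [norm_sub_rev]; exact hQO
    have h3 : ‖(n i)⁻¹ • O i - Ohat‖ = 1 - ‖O i‖ / n i := by
      rw [norm_sub_rev]; exact dOhat
    rw [dVhat]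
    linarith
  -- key first-order bound
  have hDOw : D i = O i + w i := hD i
  have hA : ‖phi (O i + w i) - Ohat - ‖O i‖⁻¹ • (w i - ⟪w i, Ohat⟫ • Ohat)‖
      ≤ 2 * ‖w i‖ ^ 2 / ‖O i‖ ^ 2 := by
    rw [hOhat_def]
    exact key_scaled (O i) (w i) hO0 (hDOw ▸ hD0)
  -- projection difference
  have hC2 : ‖⟪w i, Vhat⟫ • Vhat - ⟪w i, Ohat⟫ • Ohat‖ ≤ 2 * ‖w i‖ * ‖Vhat - Ohat‖ :=
    proj_diff (w i) Vhat Ohat hVhat1 hOhat1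
  -- the splitting identity
  set A := phi (O i + w i) - Ohat - ‖O i‖⁻¹ • (w i - ⟪w i, Ohat⟫ • Ohat) with hA_def
  set B := Ohat - Vα with hB_def
  set C1 := (‖O i‖⁻¹ - (n i)⁻¹) • (w i - ⟪w i, Ohat⟫ • Ohat) with hC1_def
  set C2 := (n i)⁻¹ • (⟪w i, Vhat⟫ • Vhat - ⟪w i, Ohat⟫ • Ohat) with hC2_def
  have hkV : (⟪w i, Vα⟫ / (n i * ‖Vα‖ ^ 2)) • Vα = (n i)⁻¹ • (⟪w i, Vhat⟫ • Vhat) := by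
    rw [hVhat_def, real_inner_smul_right, smul_smul, smul_smul]
    congr 1
    field_simp
  have hsplit : phi (D i) - (Vα + (n i)⁻¹ • w i - (⟪w i, Vα⟫ / (n i * ‖Vα‖ ^ 2)) • Vα)
      = A + B + C1 + C2 := by
    rw [hDOw, hkV, hA_def, hB_def, hC1_def, hC2_def]
    rw [sub_smul, smul_sub, smul_sub, smul_sub]
    abel
  -- norm bounds for the pieces
  have hPw : ‖w i - ⟪w i, Ohat⟫ • Ohat‖ ≤ 2 * ‖w i‖ := by
    refine (norm_sub_le _ _).trans ?_
    rw [norm_smul, hOhat1, mul_one, Real.norm_eq_abs]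
    have := abs_real_inner_le_norm (w i) Ohat
    rw [hOhat1, mul_one] at this
    linarith
  have hinv_le : (n i)⁻¹ ≤ ‖O i‖⁻¹ := inv_anti₀ hm hOn
  have hnC1 : ‖C1‖ ≤ 2 * (‖w i‖ / ‖O i‖) * (1 - ‖O i‖ / n i) := by
    rw [hC1_def, norm_smul, Real.norm_eq_abs, abs_of_nonneg (by linarith)]
    have h1 : (‖O i‖⁻¹ - (n i)⁻¹) * ‖w i - ⟪w i, Ohat⟫ • Ohat‖
        ≤ (‖O i‖⁻¹ - (n i)⁻¹) * (2 * ‖w i‖) :=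
      mul_le_mul_of_nonneg_left hPw (by linarith)
    have h2 : (‖O i‖⁻¹ - (n i)⁻¹) * (2 * ‖w i‖) = 2 * (‖w i‖ / ‖O i‖) * (1 - ‖O i‖ / n i) := by
      field_simp
    linarith
  have hnC2 : ‖C2‖ ≤ 2 * (‖w i‖ / ‖O i‖) *
      ((1 - ‖Vα‖) + Real.sqrt (Q i) + (1 - ‖O i‖ / n i)) := by
    rw [hC2_def, norm_smul, Real.norm_eq_abs, abs_of_pos (by positivity : (0:ℝ) < (n i)⁻¹)]
    have hw2 : (0:ℝ) ≤ 2 * ‖w i‖ := by positivity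
    have h1 : (n i)⁻¹ * ‖⟪w i, Vhat⟫ • Vhat - ⟪w i, Ohat⟫ • Ohat‖
        ≤ ‖O i‖⁻¹ * (2 * ‖w i‖ * ((1 - ‖Vα‖) + Real.sqrt (Q i) + (1 - ‖O i‖ / n i))) := by
      refine mul_le_mul hinv_le (hC2.trans ?_) (norm_nonneg _) (by positivity)
      exact mul_le_mul_of_nonneg_left dVO hw2
    have h2 : ‖O i‖⁻¹ * (2 * ‖w i‖ * ((1 - ‖Vα‖) + Real.sqrt (Q i) + (1 - ‖O i‖ / n i)))
        = 2 * (‖w i‖ / ‖O i‖) * ((1 - ‖Vα‖) + Real.sqrt (Q i) + (1 - ‖O i‖ / n i)) := by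
      field_simp
    linarith
  have hnB : ‖B‖ ≤ (1 - ‖O i‖ / n i) + Real.sqrt (Q i) := by
    rw [hB_def]
    have h0 : Ohat - Vα = (Ohat - (n i)⁻¹ • O i) + ((n i)⁻¹ • O i - Vα) := by abel
    rw [h0]
    refine (norm_add_le _ _).trans ?_
    rw [dOhat]
    linarith
  have hnA : ‖A‖ ≤ 2 * (‖w i‖ / ‖O i‖) ^ 2 := by
    rw [hA_def]
    refine hA.trans (le_of_eq ?_)
    rw [div_pow]
    ring
  -- combine
  rw [hsplit]
  have tri : ‖A + B + C1 + C2‖ ≤ ‖A‖ + ‖B‖ + ‖C1‖ + ‖C2‖ := by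
    have t1 := norm_add_le (A + B + C1) C2
    have t2 := norm_add_le (A + B) C1
    have t3 := norm_add_le A B
    linarith
  nlinarith [tri, hnA, hnB, hnC1, hnC2, hq, hm, hn0, hOn, hVα1, norm_nonneg (w i),
    mul_pos hm hn0]
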